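/- Let n ≥ 2, M ≥ 2, and let T : ℝⁿ → ℝⁿ be an invertible affine map. For k ∈ {0,…,M−1}ⁿ let C_k = Π_{i=1}^{n} [k_i/M, (k_i+1)/M] be the grid cells of [0,1]ⁿ and let Q_k = T(C_k); let B = {k : at most one coordinate of k is nonzero}. Suppose f, g : T([0,1]ⁿ) → ℝ are continuous functions each of which is affine on every region Q_k. If f = g on Q_k for every k ∈ B, then f = g on all of T([0,1]ⁿ). That is, for a partition isomorphic under an affine transformation to the standard grid partition, the piecewise affine function is determined by its values on the boundary family of regions (boundary-determination principle). -/
import Mathlib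


open Set

/-- Boundary-determination principle for a partition affinely
isomorphic to the standard grid: if two continuous functions, each affine on
every region `Q_k = T(C_k)` (the image of a grid cell under an invertible
affine map `T`), agree on the boundary family of regions (those whose
multi-index has at most one nonzero coordinate), then they agree on all of
`T([0,1]ⁿ)`. -/
theorem boundary_determination_affine_isomorphic_partition
    (n M : ℕ) (hn : 2 ≤ n) (hM : 2 ≤ M)
    (T : (Fin n → ℝ) ≃ᵃ[ℝ] (Fin n → ℝ))
    (f g : (Fin n → ℝ) → ℝ)
    (hfc : ContinuousOn f (⇑T '' Icc 0 1)) (hgc : ContinuousOn g (⇑T '' Icc 0 1))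
    (hfa : ∀ k : Fin n → ℕ, (∀ i, k i < M) →
      ∃ (a : Fin n → ℝ) (c : ℝ),
        ∀ y ∈ ⇑T '' {x : Fin n → ℝ |
            ∀ i, (k i : ℝ) / M ≤ x i ∧ x i ≤ ((k i : ℝ) + 1) / M},
          f y = (∑ j, a j * y j) + c)
    (hga : ∀ k : Fin n → ℕ, (∀ i, k i < M) →
      ∃ (a : Fin n → ℝ) (c : ℝ),
        ∀ y ∈ ⇑T '' {x : Fin n → ℝ |
            ∀ i, (k i : ℝ) / M ≤ x i ∧ x i ≤ ((k i : ℝ) + 1) / M},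
          g y = (∑ j, a j * y j) + c)
    (hbd : ∀ k : Fin n → ℕ, (∀ i, k i < M) →
      (∀ i j, i ≠ j → k i = 0 ∨ k j = 0) →
      ∀ y ∈ ⇑T '' {x : Fin n → ℝ |
          ∀ i, (k i : ℝ) / M ≤ x i ∧ x i ≤ ((k i : ℝ) + 1) / M},
        f y = g y) :
    ∀ y ∈ ⇑T '' Icc (0 : Fin n → ℝ) 1, f y = g y := by
  have hMpos : (0:ℝ) < M := by exact_mod_cast (by omega : 0 < M)
  -- main claim: f = g on every cell, by strong induction on the sum of the multi-index
  have main : ∀ s : ℕ, ∀ k : Fin n → ℕ, (∑ i, k i) = s → (∀ i, k i < M) →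
      ∀ x : Fin n → ℝ, (∀ i, (k i:ℝ)/M ≤ x i ∧ x i ≤ ((k i:ℝ)+1)/M) →
      f (T x) = g (T x) := by
    intro s
    induction s using Nat.strong_induction_on with
    | _ s ih =>
    intro k hks hk x hx
    by_cases hB : ∀ i j, i ≠ j → k i = 0 ∨ k j = 0
    · exact hbd k hk hB (T x) ⟨x, hx, rfl⟩
    push_neg at hB
    obtain ⟨i, j, hij, hki, hkj⟩ := hB
    obtain ⟨a, c, hf⟩ := hfa k hk
    obtain ⟨b, d, hg⟩ := hga k hk
    -- the linear part of the difference
    set l : (Fin n → ℝ) →ₗ[ℝ] ℝ :=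
      { toFun := fun y => ∑ j', (a j' - b j') * y j'
        map_add' := by intro y z; simp [mul_add, Finset.sum_add_distrib]
        map_smul' := by
          intro r y
          simp only [Pi.smul_apply, smul_eq_mul, RingHom.id_apply, Finset.mul_sum]
          exact Finset.sum_congr rfl fun j' _ => by ring
        } with hldef
    have hl : ∀ y, l y = ∑ j', (a j' - b j') * y j' := fun y => rfl
    have hfg : ∀ x' : Fin n → ℝ, (∀ r, (k r:ℝ)/M ≤ x' r ∧ x' r ≤ ((k r:ℝ)+1)/M) →
        f (T x') - g (T x') = l (T x') + (c - d) := by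
      intro x' hx'
      rw [hf (T x') ⟨x', hx', rfl⟩, hg (T x') ⟨x', hx', rfl⟩, hl]
      rw [show (∑ j', (a j' - b j') * (T x') j') =
        (∑ j', a j' * (T x') j') - (∑ j', b j' * (T x') j') by
          rw [← Finset.sum_sub_distrib]; congr 1; ext j'; ring]
      ring
    -- corner of the cell
    set v : Fin n → ℝ := fun r => (k r : ℝ)/M with hvdef
    have hvk : ∀ r, (k r:ℝ)/M ≤ v r ∧ v r ≤ ((k r:ℝ)+1)/M := by
      intro r
      refine ⟨le_refl _, ?_⟩
      rw [div_le_div_iff_of_pos_right] <;> [linarith; exact hMpos]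
    -- step: if x' is in the cell and its i0-th coordinate is on the lower face of a
    -- direction where k is nonzero, then x' is also in a cell of smaller index sum
    have step : ∀ (i0 : Fin n), k i0 ≠ 0 → ∀ x' : Fin n → ℝ,
        (∀ r, (k r:ℝ)/M ≤ x' r ∧ x' r ≤ ((k r:ℝ)+1)/M) → x' i0 = (k i0:ℝ)/M →
        f (T x') = g (T x') := by
      intro i0 hi0 x' hx' hxi0
      set k' := Function.update k i0 (k i0 - 1) with hk'def
      have hcast : ((k i0 - 1 : ℕ) : ℝ) = (k i0:ℝ) - 1 := by
        have h1 : 1 ≤ k i0 := Nat.one_le_iff_ne_zero.mpr hi0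
        push_cast [Nat.cast_sub h1]; ring
      have hk'lt : ∀ r, k' r < M := by
        intro r
        rcases eq_or_ne r i0 with rfl | hr
        · simp only [hk'def, Function.update_self]
          have := hk r; omega
        · simp only [hk'def, Function.update_of_ne hr]; exact hk r
      have hsum : ∑ r, k' r < s := by
        rw [← hks]
        have h1 : ∀ r ∈ Finset.univ, k' r ≤ k r := by
          intro r _
          rcases eq_or_ne r i0 with rfl | hr
          · simp only [hk'def, Function.update_self]; omega
          · simp only [hk'def, Function.update_of_ne hr]; exact le_refl _
        have h2 : k' i0 < k i0 := by
          simp only [hk'def, Function.update_self]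
          have := Nat.one_le_iff_ne_zero.mpr hi0; omega
        exact Finset.sum_lt_sum h1 ⟨i0, Finset.mem_univ i0, h2⟩
      have hx'k' : ∀ r, (k' r:ℝ)/M ≤ x' r ∧ x' r ≤ ((k' r:ℝ)+1)/M := by
        intro r
        rcases eq_or_ne r i0 with rfl | hr
        · simp only [hk'def, Function.update_self, hcast, hxi0]
          constructor
          · rw [div_le_div_iff_of_pos_right] <;> [linarith; exact hMpos]
          · rw [div_le_div_iff_of_pos_right] <;> [linarith; exact hMpos]
        · simp only [hk'def, Function.update_of_ne hr]; exact hx' r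
      exact ih (∑ r, k' r) hsum k' rfl hk'lt x' hx'k'
    -- f = g at the corner
    have hv0 : f (T v) = g (T v) := step i hki v hvk rfl
    -- the perturbed corner points
    set q : Fin n → (Fin n → ℝ) := fun m => v + (1/(2*(M:ℝ))) • (Pi.single m 1 : Fin n → ℝ) with hqdef
    have h2M : (0:ℝ) < 2*M := by linarith
    have hq : ∀ m, ∀ r, (k r:ℝ)/M ≤ q m r ∧ q m r ≤ ((k r:ℝ)+1)/M := by
      intro m r
      rcases eq_or_ne r m with rfl | hr
      · simp only [hqdef, Pi.add_apply, Pi.smul_apply, Pi.single_eq_same, smul_eq_mul,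
          mul_one, hvdef]
        have hhalf : (0:ℝ) < 1/(2*M) := by positivity
        have hle : (1:ℝ)/(2*M) ≤ 1/M := by
          rw [div_le_div_iff₀ h2M hMpos]; linarith
        constructor
        · linarith
        · have e1 : ((k r:ℝ)+1)/M = (k r:ℝ)/M + 1/M := by ring
          rw [e1]; linarith
      · simp only [hqdef, Pi.add_apply, Pi.smul_apply, Pi.single_eq_of_ne hr, smul_eq_mul,
          mul_zero, add_zero]
        exact hvk r
    have hq0 : ∀ m, f (T (q m)) = g (T (q m)) := by
      intro m
      rcases eq_or_ne m i with rfl | hmi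
      · refine step j hkj (q m) (hq m) ?_
        simp [hqdef, Pi.single_eq_of_ne (Ne.symm hij), hvdef]
      · refine step i hki (q m) (hq m) ?_
        simp [hqdef, Pi.single_eq_of_ne (Ne.symm hmi), hvdef]
    -- the linear part vanishes on all directions
    have hTlin : ∀ w : Fin n → ℝ, T (v + w) = T.linear w + T v := by
      intro w
      have := T.toAffineMap.map_vadd v w
      simpa [vadd_eq_add, add_comm] using this
    have hL : ∀ m, l (T.linear (Pi.single m 1)) = 0 := by
      intro m
      have h1 : f (T (q m)) - g (T (q m)) = l (T (q m)) + (c - d) := hfg (q m) (hq m)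
      have h2 : f (T v) - g (T v) = l (T v) + (c - d) := hfg v hvk
      rw [hq0 m, sub_self] at h1
      rw [hv0, sub_self] at h2
      have h3 : T (q m) = (1/(2*(M:ℝ))) • T.linear (Pi.single m (1:ℝ)) + T v := by
        have := hTlin ((1/(2*(M:ℝ))) • (Pi.single m 1 : Fin n → ℝ))
        rw [map_smul] at this
        exact this
      rw [h3, map_add, map_smul, smul_eq_mul] at h1
      have h4 : (1/(2*(M:ℝ))) * l (T.linear (Pi.single m 1)) = 0 := by linarith
      rcases mul_eq_zero.mp h4 with h5 | h5
      · exfalso; have : (0:ℝ) < 1/(2*M) := by positivity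
        linarith
      · exact h5
    have hLall : ∀ w : Fin n → ℝ, l (T.linear w) = 0 := by
      intro w
      have hw : w = ∑ m, w m • (Pi.single m 1 : Fin n → ℝ) := by
        funext r
        rw [Finset.sum_apply]
        simp [Pi.single_apply, Finset.sum_ite_eq]
      rw [hw, map_sum, map_sum]
      simp only [map_smul, smul_eq_mul]
      rw [Finset.sum_congr rfl fun m _ => by rw [hL m, mul_zero]]
      simp
    -- conclude
    have hx2 : f (T x) - g (T x) = l (T x) + (c - d) := hfg x hx
    have hv2 : f (T v) - g (T v) = l (T v) + (c - d) := hfg v hvk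
    have hTx : T x = T.linear (x - v) + T v := by
      have := hTlin (x - v)
      rw [add_sub_cancel] at this
      exact this
    have hlx : l (T x) = l (T v) := by
      rw [hTx, map_add, hLall (x - v), zero_add]
    rw [hv0, sub_self] at hv2
    rw [hlx] at hx2
    linarith
  rintro y ⟨x, hx, rfl⟩
  set k : Fin n → ℕ := fun i => min ⌊x i * M⌋₊ (M-1) with hkdef
  refine main (∑ i, k i) k rfl (fun i => lt_of_le_of_lt (min_le_right _ _) (by omega)) x ?_
  intro i
  have hx0 : 0 ≤ x i := hx.1 i
  have hx1 : x i ≤ 1 := hx.2 i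
  have ht0 : 0 ≤ x i * M := by positivity
  have ht1 : x i * M ≤ M := by nlinarith
  constructor
  · rw [div_le_iff₀ hMpos]
    calc ((min ⌊x i * M⌋₊ (M-1) : ℕ) : ℝ) ≤ (⌊x i * M⌋₊ : ℝ) := by
          exact_mod_cast Nat.cast_le.mpr (min_le_left _ _)
      _ ≤ x i * M := Nat.floor_le ht0
  · rw [le_div_iff₀ hMpos]
    rcases le_or_gt ⌊x i * M⌋₊ (M-1) with h | h
    · rw [show k i = ⌊x i * M⌋₊ from min_eq_left h]
      have := Nat.lt_floor_add_one (x i * M)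
      linarith
    · rw [show k i = M - 1 from min_eq_right h.le]
      have : ((M - 1 : ℕ) : ℝ) = (M:ℝ) - 1 := by
        have h1 : 1 ≤ M := by omega
        push_cast [Nat.cast_sub h1]; ring
      rw [this]; linarith
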